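/- Let U₁ : ℝ → ℝ be real-analytic and 2π-periodic with U₁(0) = 0, U₁′(0) = 0, U₁″(0) = −1, and U₁(x) < 0 for all x ∈ (0, 2π). Then there exists a real-analytic 2π-periodic function ψ₁ : ℝ → ℝ with ψ₁(0) = 1 and ψ₁(x) > 0 for all x, such that the function ψ(x) := 2 sin(x/2) ψ₁(x) satisfies: ψ(x)² = −2 U₁(x) for all x ∈ ℝ; ψ(x + 2π) = −ψ(x) for all x (2π-antiperiodicity, hence 4π-periodicity); ψ(0) = 0 and ψ′(0) = 1; ψ(x) ≥ 0 on [0, 2π]; and ψ(x) = 0 if and only if x ∈ 2πℤ. -/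

import Mathlib

noncomputable section


lemma analyticAt_rsin (x : ℝ) : AnalyticAt ℝ Real.sin x := by
  have h : AnalyticAt ℝ (fun y : ℝ => (Complex.sin y).re) x :=
    (Complex.reCLM.analyticAt _).comp
      (((Complex.differentiable_sin.analyticAt _).restrictScalars).comp
        (Complex.ofRealCLM.analyticAt x))
  exact h.congr (by filter_upwards with y using Complex.sin_ofReal_re y)

lemma analyticAt_rlog {x : ℝ} (hx : 0 < x) : AnalyticAt ℝ Real.log x := by
  have m : (x : ℂ) ∈ Complex.slitPlane := Complex.ofReal_mem_slitPlane.2 hx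
  have h : AnalyticAt ℝ (fun y : ℝ => (Complex.log y).re) x :=
    (Complex.reCLM.analyticAt _).comp
      (((analyticAt_clog m).restrictScalars).comp (Complex.ofRealCLM.analyticAt x))
  refine h.congr ?_
  filter_upwards with y using Complex.log_ofReal_re y

lemma analyticAt_rsqrt {x : ℝ} (hx : 0 < x) : AnalyticAt ℝ Real.sqrt x := by
  have h : AnalyticAt ℝ (fun y : ℝ => Real.exp (Real.log y * (1/2 : ℝ))) x :=
    analyticAt_rexp.comp ((analyticAt_rlog hx).mul analyticAt_const)
  refine h.congr ?_
  filter_upwards [eventually_gt_nhds hx] with y hy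
  rw [Real.sqrt_eq_rpow, Real.rpow_def_of_pos hy]

lemma analyticAt_deriv' {f : ℝ → ℝ} {x : ℝ} (h : AnalyticAt ℝ f x) :
    AnalyticAt ℝ (deriv f) x := by
  have h1 : AnalyticAt ℝ (fun y => fderiv ℝ f y 1) x :=
    ((ContinuousLinearMap.apply ℝ ℝ (1:ℝ)).analyticAt _).comp h.fderiv
  refine h1.congr ?_
  filter_upwards with y using fderiv_apply_one_eq_deriv

lemma key_dslope {U : ℝ → ℝ} (hU : AnalyticAt ℝ U 0) (h0 : U 0 = 0) (h1 : deriv U 0 = 0) :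
    AnalyticAt ℝ (dslope (dslope U 0) 0) 0 ∧
    (∀ x, U x = x ^ 2 * dslope (dslope U 0) 0 x) ∧
    deriv (deriv U) 0 = 2 * dslope (dslope U 0) 0 0 := by
  set g := dslope (dslope U 0) 0 with hgdef
  obtain ⟨p, hp⟩ := hU
  have hg : AnalyticAt ℝ g 0 :=
    ⟨_, (hp.has_fpower_series_dslope_fslope).has_fpower_series_dslope_fslope⟩
  have heq : ∀ x, U x = x ^ 2 * g x := by
    intro x
    rcases eq_or_ne x 0 with rfl | hx
    · simpa using h0
    · rw [hgdef, dslope_of_ne _ hx, slope_def_field, dslope_same, dslope_of_ne _ hx,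
        slope_def_field, h1]
      rw [h0]
      field_simp
      ring
  refine ⟨hg, heq, ?_⟩
  have hUeq : U = fun z => z ^ 2 * g z := funext heq
  have hdg : ∀ᶠ y in nhds (0:ℝ), deriv U y = 2 * y * g y + y ^ 2 * deriv g y := by
    filter_upwards [hg.eventually_analyticAt] with y hy
    have hd : HasDerivAt (fun z => z ^ 2 * g z)
        (2 * y * g y + y ^ 2 * deriv g y) y := by
      have : HasDerivAt (fun z => z ^ 2 * g z) _ y := (hasDerivAt_pow 2 y).fun_mul hy.differentiableAt.hasDerivAt
      convert this using 1
      ring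
    rw [hUeq]
    exact hd.deriv
  have hdg' : deriv U =ᶠ[nhds 0] fun y => 2 * y * g y + y ^ 2 * deriv g y := hdg
  rw [hdg'.deriv_eq]
  have hd1 : HasDerivAt (fun y : ℝ => 2 * y * g y + y ^ 2 * deriv g y)
      (2 * g 0) 0 := by
    have ha : HasDerivAt (fun y : ℝ => 2 * y * g y)
        (2 * g 0 + 2 * 0 * deriv g 0) 0 := by
      have : HasDerivAt (fun y : ℝ => 2 * y * g y) _ 0 :=
        ((hasDerivAt_id (0:ℝ)).const_mul 2).fun_mul hg.differentiableAt.hasDerivAt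
      convert this using 1
      simp
    have hb : HasDerivAt (fun y : ℝ => y ^ 2 * deriv g y)
        ((2 * 0 ^ 1) * deriv g 0 + 0 ^ 2 * deriv (deriv g) 0) 0 := by
      have : HasDerivAt (fun y : ℝ => y ^ 2 * deriv g y) _ 0 := (hasDerivAt_pow 2 (0:ℝ)).fun_mul
        ((analyticAt_deriv' hg).differentiableAt.hasDerivAt)
      convert this using 1
      norm_num
    have : HasDerivAt (fun y : ℝ => 2 * y * g y + y ^ 2 * deriv g y) _ 0 := ha.fun_add hb
    convert this using 1
    ring
  rw [hd1.deriv]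

/-- The separatrix function: for a real-analytic `2π`-periodic potential `U₁` with
a nondegenerate absolute maximum `U₁(0) = 0` (normalized `U₁″(0) = −1`) and
`U₁ < 0` on `(0, 2π)`, there is a real-analytic, `2π`-periodic, positive `ψ₁` with
`ψ₁(0) = 1` such that `ψ(x) = 2 sin(x/2) ψ₁(x)` satisfies `ψ² = −2U₁`,
`ψ(x + 2π) = −ψ(x)` (hence `4π`-periodicity), `ψ(0) = 0`, `ψ′(0) = 1`, `ψ ≥ 0` on
`[0, 2π]`, and `ψ(x) = 0` iff `x ∈ 2πℤ`. -/
theorem separatrix_function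
    (U₁ : ℝ → ℝ) (hA : ∀ x, AnalyticAt ℝ U₁ x)
    (hper : Function.Periodic U₁ (2 * Real.pi))
    (h0 : U₁ 0 = 0) (h1 : deriv U₁ 0 = 0) (h2 : deriv (deriv U₁) 0 = -1)
    (hneg : ∀ x ∈ Set.Ioo 0 (2 * Real.pi), U₁ x < 0) :
    ∃ ψ₁ : ℝ → ℝ, (∀ x, AnalyticAt ℝ ψ₁ x) ∧
      Function.Periodic ψ₁ (2 * Real.pi) ∧
      ψ₁ 0 = 1 ∧ (∀ x, 0 < ψ₁ x) ∧
      (∀ x, (2 * Real.sin (x / 2) * ψ₁ x) ^ 2 = -2 * U₁ x) ∧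
      (∀ x, 2 * Real.sin ((x + 2 * Real.pi) / 2) * ψ₁ (x + 2 * Real.pi)
          = -(2 * Real.sin (x / 2) * ψ₁ x)) ∧
      (∀ x, 2 * Real.sin ((x + 4 * Real.pi) / 2) * ψ₁ (x + 4 * Real.pi)
          = 2 * Real.sin (x / 2) * ψ₁ x) ∧
      2 * Real.sin ((0 : ℝ) / 2) * ψ₁ 0 = 0 ∧
      deriv (fun x => 2 * Real.sin (x / 2) * ψ₁ x) 0 = 1 ∧
      (∀ x ∈ Set.Icc (0 : ℝ) (2 * Real.pi), 0 ≤ 2 * Real.sin (x / 2) * ψ₁ x) ∧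
      (∀ x : ℝ, 2 * Real.sin (x / 2) * ψ₁ x = 0 ↔ ∃ k : ℤ, x = 2 * Real.pi * k) := by
  -- basic facts about sin (x/2)
  have hσA : ∀ x : ℝ, AnalyticAt ℝ (fun y : ℝ => Real.sin (y / 2)) x := by
    intro x
    have hhalf : AnalyticAt ℝ (fun y : ℝ => y / 2) x :=
      (analyticAt_id (𝕜 := ℝ) (E := ℝ)).div analyticAt_const two_ne_zero
    exact AnalyticAt.comp (f := fun y : ℝ => y / 2) (x := x) (analyticAt_rsin (x / 2)) hhalf
  have hzero : ∀ x : ℝ, Real.sin (x / 2) = 0 ↔ ∃ k : ℤ, x = 2 * Real.pi * k := by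
    intro x
    rw [Real.sin_eq_zero_iff]
    constructor
    · rintro ⟨n, hn⟩; exact ⟨n, by linarith⟩
    · rintro ⟨k, hk⟩; exact ⟨k, by rw [hk]; ring⟩
  have hU₁zero : ∀ x : ℝ, Real.sin (x / 2) = 0 → U₁ x = 0 := by
    intro x hx
    obtain ⟨k, hk⟩ := (hzero x).1 hx
    have h' : U₁ (x - k * (2 * Real.pi)) = U₁ x := hper.sub_int_mul_eq k
    have hx0 : x - k * (2 * Real.pi) = 0 := by rw [hk]; ring
    rw [← h', hx0, h0]
  have hUneg : ∀ x : ℝ, Real.sin (x / 2) ≠ 0 → U₁ x < 0 := by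
    intro x hx
    have hπ : (0:ℝ) < 2 * Real.pi := by positivity
    set k : ℤ := ⌊x / (2 * Real.pi)⌋ with hkdef
    set y : ℝ := x - k * (2 * Real.pi) with hydef
    have hyf : y = Int.fract (x / (2 * Real.pi)) * (2 * Real.pi) := by
      rw [hydef, Int.fract]
      field_simp
      rw [← hkdef]
      ring
    have hy0 : 0 ≤ y := by
      rw [hyf]; exact mul_nonneg (Int.fract_nonneg _) hπ.le
    have hy1 : y < 2 * Real.pi := by
      rw [hyf]
      calc Int.fract (x / (2 * Real.pi)) * (2 * Real.pi) < 1 * (2 * Real.pi) := by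
            exact mul_lt_mul_of_pos_right (Int.fract_lt_one _) hπ
        _ = 2 * Real.pi := one_mul _
    have hyne : y ≠ 0 := by
      intro h
      apply hx
      rw [hydef] at h
      refine (hzero x).2 ⟨k, ?_⟩
      have hxk : x = k * (2 * Real.pi) := by linarith
      rw [hxk]; ring
    have := hneg y ⟨lt_of_le_of_ne hy0 (Ne.symm hyne), hy1⟩
    rwa [hydef, hper.sub_int_mul_eq k] at this
  -- the function f
  set f : ℝ → ℝ := fun x =>
    if Real.sin (x / 2) = 0 then 1 else -U₁ x / (2 * Real.sin (x / 2) ^ 2) with hfdef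
  have hfpos : ∀ x, 0 < f x := by
    intro x
    by_cases hx : Real.sin (x / 2) = 0
    · simp only [hfdef, if_pos hx]; norm_num
    · simp only [hfdef, if_neg hx]
      apply div_pos (by linarith [hUneg x hx]) (by positivity)
  have hfper : Function.Periodic f (2 * Real.pi) := by
    intro x
    have hs : Real.sin ((x + 2 * Real.pi) / 2) = -Real.sin (x / 2) := by
      rw [show (x + 2 * Real.pi) / 2 = x / 2 + Real.pi by ring, Real.sin_add_pi]
    simp only [hfdef, hs, neg_eq_zero, neg_sq, hper x]
  -- analyticity at 0
  obtain ⟨hgA, hgeq, hgd⟩ := key_dslope (hA 0) h0 h1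
  set g := dslope (dslope U₁ 0) 0 with hgdef
  have hg0 : g 0 = -(1/2) := by
    rw [h2] at hgd; linarith
  set d : ℝ → ℝ := dslope (fun y => Real.sin (y / 2)) 0 with hddef
  have hσd : HasDerivAt (fun y : ℝ => Real.sin (y / 2)) (1/2) 0 := by
    have := (Real.hasDerivAt_sin ((0:ℝ) / 2)).comp 0 ((hasDerivAt_id (0:ℝ)).div_const 2)
    simpa [Function.comp_def] using this
  have hd0 : d 0 = 1/2 := by rw [hddef, dslope_same]; exact hσd.deriv
  have hdA : AnalyticAt ℝ d 0 := by
    obtain ⟨p, hp⟩ := hσA 0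
    exact ⟨_, hp.has_fpower_series_dslope_fslope⟩
  have hσx : ∀ x : ℝ, x ≠ 0 → Real.sin (x / 2) = x * d x := by
    intro x hx
    rw [hddef, dslope_of_ne _ hx, slope_def_field]
    rw [show Real.sin ((0:ℝ)/2) = 0 by norm_num]
    field_simp
    ring
  set F : ℝ → ℝ := fun x => -g x / (2 * d x ^ 2) with hFdef
  have hFA : AnalyticAt ℝ F 0 := by
    refine (hgA.neg).div (analyticAt_const.mul (hdA.pow 2)) ?_
    rw [hd0]; norm_num
  have hF0 : F 0 = 1 := by
    rw [hFdef]; simp only [hg0, hd0]; norm_num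
  have hπpos : (0:ℝ) < Real.pi := Real.pi_pos
  have hf0eq : f =ᶠ[nhds (0:ℝ)] F := by
    have hev : ∀ᶠ x in nhds (0:ℝ), x ∈ Set.Ioo (-(2 * Real.pi)) (2 * Real.pi) :=
      Ioo_mem_nhds (by linarith) (by linarith)
    filter_upwards [hev] with x hx
    rcases eq_or_ne x 0 with rfl | hx0
    · rw [hF0]
      simp only [hfdef]
      simp
    · have hsx : Real.sin (x / 2) ≠ 0 := by
        rw [Ne, Real.sin_eq_zero_iff_of_lt_of_lt (by linarith [hx.1]) (by linarith [hx.2])]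
        exact fun h => hx0 (by linarith)
      have hxx : (x:ℝ) ^ 2 ≠ 0 := pow_ne_zero _ hx0
      simp only [hfdef, if_neg hsx]
      rw [hgeq x, hσx x hx0, hFdef, mul_pow]
      rw [show -(x ^ 2 * g x) = x ^ 2 * -g x by ring,
        show (2:ℝ) * (x ^ 2 * d x ^ 2) = x ^ 2 * (2 * d x ^ 2) by ring,
        mul_div_mul_left _ _ hxx]
  have hfA0 : AnalyticAt ℝ f 0 := hFA.congr hf0eq.symm
  have hf0 : f 0 = 1 := by simp only [hfdef]; simp
  -- analyticity everywhere
  have hfA : ∀ x, AnalyticAt ℝ f x := by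
    intro x
    by_cases hx : Real.sin (x / 2) = 0
    · obtain ⟨k, hk⟩ := (hzero x).1 hx
      have he : AnalyticAt ℝ (fun y : ℝ => y - k * (2 * Real.pi)) x :=
        (analyticAt_id (𝕜 := ℝ) (E := ℝ)).sub analyticAt_const
      have hx0 : x - k * (2 * Real.pi) = 0 := by rw [hk]; ring
      have hcomp : AnalyticAt ℝ (f ∘ fun y : ℝ => y - k * (2 * Real.pi)) x := by
        refine AnalyticAt.comp ?_ he
        rw [hx0]; exact hfA0
      refine hcomp.congr ?_
      filter_upwards with y using hfper.sub_int_mul_eq k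
    · have hcont : Continuous fun y : ℝ => Real.sin (y / 2) :=
        Real.continuous_sin.comp (continuous_id.div_const 2)
      have hopen : IsOpen {y : ℝ | Real.sin (y / 2) ≠ 0} :=
        isOpen_compl_singleton.preimage hcont
      have hformA : AnalyticAt ℝ (fun y => -U₁ y / (2 * Real.sin (y / 2) ^ 2)) x := by
        refine ((hA x).neg).div (analyticAt_const.mul ((hσA x).pow 2)) ?_
        positivity
      refine hformA.congr ?_
      filter_upwards [hopen.mem_nhds hx] with y hy
      simp only [hfdef, if_neg hy]
  -- define ψ₁
  refine ⟨fun x => Real.sqrt (f x), ?_, ?_, ?_, ?_, ?_, ?_, ?_, ?_, ?_, ?_, ?_⟩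
  · exact fun x => (analyticAt_rsqrt (hfpos x)).comp (hfA x)
  · intro x
    show Real.sqrt (f (x + 2 * Real.pi)) = Real.sqrt (f x)
    rw [hfper x]
  · show Real.sqrt (f 0) = 1
    rw [hf0, Real.sqrt_one]
  · exact fun x => Real.sqrt_pos.2 (hfpos x)
  · intro x
    show (2 * Real.sin (x / 2) * Real.sqrt (f x)) ^ 2 = -2 * U₁ x
    have hsq : Real.sqrt (f x) ^ 2 = f x := Real.sq_sqrt (hfpos x).le
    by_cases hx : Real.sin (x / 2) = 0
    · rw [hx, hU₁zero x hx]; ring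
    · have : f x = -U₁ x / (2 * Real.sin (x / 2) ^ 2) := by
        simp only [hfdef, if_neg hx]
      rw [mul_pow, mul_pow, hsq, this]
      field_simp
  · intro x
    have hs : Real.sin ((x + 2 * Real.pi) / 2) = -Real.sin (x / 2) := by
      rw [show (x + 2 * Real.pi) / 2 = x / 2 + Real.pi by ring, Real.sin_add_pi]
    show 2 * Real.sin ((x + 2 * Real.pi) / 2) * Real.sqrt (f (x + 2 * Real.pi))
        = -(2 * Real.sin (x / 2) * Real.sqrt (f x))
    rw [hs, hfper x]
    ring
  · intro x
    have hs : Real.sin ((x + 4 * Real.pi) / 2) = Real.sin (x / 2) := by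
      rw [show (x + 4 * Real.pi) / 2 = x / 2 + 2 * Real.pi by ring, Real.sin_add_two_pi]
    have hp4 : f (x + 4 * Real.pi) = f x := by
      rw [show x + 4 * Real.pi = x + 2 * Real.pi + 2 * Real.pi by ring, hfper, hfper]
    show 2 * Real.sin ((x + 4 * Real.pi) / 2) * Real.sqrt (f (x + 4 * Real.pi))
        = 2 * Real.sin (x / 2) * Real.sqrt (f x)
    rw [hs, hp4]
  · show 2 * Real.sin ((0:ℝ) / 2) * Real.sqrt (f 0) = 0
    simp
  · have hs2 : HasDerivAt (fun x : ℝ => 2 * Real.sin (x / 2)) 1 0 := by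
      have := ((Real.hasDerivAt_sin ((0:ℝ) / 2)).comp 0
        ((hasDerivAt_id (0:ℝ)).div_const 2)).const_mul 2
      simpa using this
    have hψA : AnalyticAt ℝ (fun x => Real.sqrt (f x)) 0 :=
      (analyticAt_rsqrt (hfpos 0)).comp (hfA 0)
    have hψd : HasDerivAt (fun x => Real.sqrt (f x))
        (deriv (fun x => Real.sqrt (f x)) 0) 0 :=
      hψA.differentiableAt.hasDerivAt
    have := (hs2.fun_mul hψd).deriv
    rw [show (fun x => 2 * Real.sin (x / 2) * Real.sqrt (f x))
        = fun x => (fun x : ℝ => 2 * Real.sin (x / 2)) x * Real.sqrt (f x) from rfl]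
    rw [this]
    simp [hf0]
  · intro x hx
    show 0 ≤ 2 * Real.sin (x / 2) * Real.sqrt (f x)
    have hs : 0 ≤ Real.sin (x / 2) :=
      Real.sin_nonneg_of_nonneg_of_le_pi (by linarith [hx.1]) (by linarith [hx.2])
    have := Real.sqrt_nonneg (f x)
    positivity
  · intro x
    show 2 * Real.sin (x / 2) * Real.sqrt (f x) = 0 ↔ _
    have hψ : Real.sqrt (f x) ≠ 0 := (Real.sqrt_pos.2 (hfpos x)).ne'
    rw [← hzero x]
    constructor
    · intro h
      rcases mul_eq_zero.1 h with h' | h'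
      · rcases mul_eq_zero.1 h' with h'' | h''
        · norm_num at h''
        · exact h''
      · exact absurd h' hψ
    · intro h; rw [h]; ring
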